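/- Let d ≤ n be natural numbers. For all integers i and l with 0 ≤ i ≤ n and 0 ≤ l ≤ n − d, one has (−1)^l · C(d, i−l) = (d! / (i! · (n−i)!)) · ∏_{j=0}^{l−1} (j − i) · ∏_{j=d+l+1}^{n} (j − i), as an identity of rational numbers. -/

import Mathlib

/-- The binomial coefficient `C(d, m)` for an integer `m`, with the convention that it
vanishes for `m < 0` (and automatically for `m > d`). -/
def chooseQ (d : ℕ) (m : ℤ) : ℚ :=
  if 0 ≤ m then (d.choose m.toNat : ℚ) else 0

lemma prodIcc_aux (i a : ℕ) (hia : i ≤ a) : ∀ m : ℕ,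
    (∏ j ∈ Finset.Icc (a + 1) (a + m), ((j : ℚ) - i)) = ((a + m - i).descFactorial m : ℚ) := by
  intro m
  induction m with
  | zero => simp
  | succ m ih =>
    rw [show a + (m + 1) = (a + m) + 1 by ring, Finset.prod_Icc_succ_top (by omega), ih]
    have h1 : a + m + 1 - i = (a + m - i) + 1 := by omega
    rw [h1, Nat.succ_descFactorial_succ]
    push_cast [Nat.cast_sub (by omega : i ≤ a + m)]
    ring

/-- For natural numbers `d ≤ n` and all integers `i`, `l` with `0 ≤ i ≤ n` and
`0 ≤ l ≤ n − d`, one has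
`(−1)^l · C(d, i−l) = (d! / (i!·(n−i)!)) · ∏_{j=0}^{l−1} (j−i) · ∏_{j=d+l+1}^{n} (j−i)`
as rational numbers. -/
theorem stmt0 (d n : ℕ) (hdn : d ≤ n) (i l : ℕ) (hi : i ≤ n) (hl : l ≤ n - d) :
    (-1 : ℚ) ^ l * chooseQ d ((i : ℤ) - (l : ℤ)) =
      (d.factorial : ℚ) / ((i.factorial : ℚ) * ((n - i).factorial : ℚ)) *
        (∏ j ∈ Finset.range l, ((j : ℚ) - (i : ℚ))) *
        ∏ j ∈ Finset.Icc (d + l + 1) n, ((j : ℚ) - (i : ℚ)) := by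
  have hdl : d + l ≤ n := by omega
  by_cases hil : i < l
  · have h1 : chooseQ d ((i : ℤ) - (l : ℤ)) = 0 := by
      unfold chooseQ
      rw [if_neg (by omega)]
    have h2 : (∏ j ∈ Finset.range l, ((j : ℚ) - i)) = 0 :=
      Finset.prod_eq_zero (Finset.mem_range.mpr hil) (by simp)
    rw [h1, h2]; ring
  push_neg at hil
  by_cases hid : d + l < i
  · have h1 : chooseQ d ((i : ℤ) - (l : ℤ)) = 0 := by
      unfold chooseQ
      rw [if_pos (by omega)]
      have ht : ((i : ℤ) - (l : ℤ)).toNat = i - l := by omega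
      rw [ht, Nat.choose_eq_zero_of_lt (by omega)]
      simp
    have h2 : (∏ j ∈ Finset.Icc (d + l + 1) n, ((j : ℚ) - i)) = 0 :=
      Finset.prod_eq_zero (Finset.mem_Icc.mpr ⟨by omega, hi⟩) (by simp)
    rw [h1, h2]; ring
  push_neg at hid
  -- main case: l ≤ i ≤ d + l
  have hP1 : (∏ j ∈ Finset.range l, ((j : ℚ) - i)) =
      (-1 : ℚ) ^ l * (i.descFactorial l : ℚ) := by
    rw [Nat.descFactorial_eq_prod_range, Nat.cast_prod,
      show ((-1 : ℚ)) ^ l = ∏ _j ∈ Finset.range l, (-1 : ℚ) by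
        rw [Finset.prod_const, Finset.card_range],
      ← Finset.prod_mul_distrib]
    refine Finset.prod_congr rfl fun j hj => ?_
    have hji : j ≤ i := le_trans (le_of_lt (Finset.mem_range.mp hj)) hil
    push_cast [Nat.cast_sub hji]
    ring
  have hP2 : (∏ j ∈ Finset.Icc (d + l + 1) n, ((j : ℚ) - i)) =
      ((n - i).descFactorial (n - d - l) : ℚ) := by
    have := prodIcc_aux i (d + l) hid (n - d - l)
    rw [show d + l + (n - d - l) = n by omega] at this
    exact this
  have hC : chooseQ d ((i : ℤ) - (l : ℤ)) = (d.choose (i - l) : ℚ) := by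
    unfold chooseQ
    rw [if_pos (by omega)]
    congr 2
    omega
  rw [hC, hP1, hP2]
  have hfac1 : (i.factorial : ℚ) = ((i - l).factorial : ℚ) * (i.descFactorial l : ℚ) := by
    rw [← Nat.cast_mul, Nat.factorial_mul_descFactorial hil]
  have hfac2 : ((n - i).factorial : ℚ) =
      ((d + l - i).factorial : ℚ) * ((n - i).descFactorial (n - d - l) : ℚ) := by
    rw [← Nat.cast_mul]
    have := Nat.factorial_mul_descFactorial (show n - d - l ≤ n - i by omega)
    rw [show n - i - (n - d - l) = d + l - i by omega] at this
    rw [this]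
  have hcast : (d.choose (i - l) : ℚ) =
      (d.factorial : ℚ) / (((i - l).factorial : ℚ) * ((d - (i - l)).factorial : ℚ)) :=
    Nat.cast_choose ℚ (by omega)
  rw [hcast, show d - (i - l) = d + l - i by omega, hfac1, hfac2]
  have h1 : ((i - l).factorial : ℚ) ≠ 0 := Nat.cast_ne_zero.mpr (Nat.factorial_ne_zero _)
  have h2 : ((d + l - i).factorial : ℚ) ≠ 0 := Nat.cast_ne_zero.mpr (Nat.factorial_ne_zero _)
  have h3 : (i.descFactorial l : ℚ) ≠ 0 := by
    intro h
    rw [h, mul_zero] at hfac1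
    exact Nat.cast_ne_zero.mpr (Nat.factorial_ne_zero i) hfac1
  have h4 : ((n - i).descFactorial (n - d - l) : ℚ) ≠ 0 := by
    intro h
    rw [h, mul_zero] at hfac2
    exact Nat.cast_ne_zero.mpr (Nat.factorial_ne_zero (n - i)) hfac2
  field_simp
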